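/- Let (X,d,δ) be a dilatation structure. Then for all x ∈ X, all u, v ∈ X with d(x,u) ≤ 1 and d(x,v) ≤ 1, and all μ ∈ Γ with ν(μ) ≤ 1, the limit distance d^x has the cone property with respect to dilatations: d^x(u,v) = (1/ν(μ)) d^x(δ_μ^x u, δ_μ^x v). -/

import Mathlib

open Metric Set

/-- A dilatation structure `(X,d,δ)` in the sense of Buliga.  `Γ` is a separated
commutative topological group endowed with a continuous morphism `ν : Γ → (0,∞)`
with `inf ν(Γ) = 0`.  For every point `x` and every `ε ∈ Γ` with `ν ε ≤ 1` the
dilatation `δ ε x` is a homeomorphism from an open neighbourhood `U x` of `x`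
onto an open neighbourhood `V ε x` of `x`, subject to the axioms A0–A3. -/
structure DilatationStructure (Γ : Type*) [CommGroup Γ] [TopologicalSpace Γ]
    (X : Type*) [MetricSpace X] where
  /-- the morphism `ν : Γ → (0,∞)` -/
  ν : Γ → ℝ
  ν_pos : ∀ ε, 0 < ν ε
  ν_mul : ∀ ε μ, ν (ε * μ) = ν ε * ν μ
  ν_cont : Continuous ν
  ν_inf : ∀ a : ℝ, 0 < a → ∃ ε, ν ε < a
  /-- the dilatations: `δ ε x y` is `δ_ε^x y` -/
  δ : Γ → X → X → X
  U : X → Set X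
  V : Γ → X → Set X
  W : Γ → X → Set X
  rA : ℝ
  rB : ℝ
  one_lt_rB : 1 < rB
  rB_le_rA : rB ≤ rA
  U_open : ∀ x, IsOpen (U x)
  U_mem : ∀ x, x ∈ U x
  V_open : ∀ ε x, ν ε ≤ 1 → IsOpen (V ε x)
  V_mem : ∀ ε x, ν ε ≤ 1 → x ∈ V ε x
  -- A0
  closedBall_subset_U : ∀ x, closedBall x rA ⊆ U x
  δ_homeo : ∀ ε x, ν ε ≤ 1 →
    ContinuousOn (δ ε x) (U x) ∧ BijOn (δ ε x) (U x) (V ε x) ∧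
      ContinuousOn (δ ε⁻¹ x) (V ε x)
  ball_subset_image : ∀ ε x, ν ε < 1 → ball x (ν ε) ⊆ δ ε x '' ball x rA
  image_subset_V : ∀ ε x, ν ε < 1 → δ ε x '' ball x rA ⊆ V ε x
  V_subset_U : ∀ ε x, ν ε ≤ 1 → V ε x ⊆ U x
  W_nhds : ∀ ε x, 1 < ν ε → W ε x ∈ nhds x
  V_subset_W : ∀ ε x, ν ε < 1 → V ε x ⊆ W ε⁻¹ x
  δ_injOn_W : ∀ ε x, 1 < ν ε → InjOn (δ ε x) (W ε x)
  δ_image_W : ∀ ε x, 1 < ν ε → δ ε x '' W ε x ⊆ ball x rB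
  δ_inv : ∀ ε x, ν ε ≤ 1 → ∀ u ∈ U x, δ ε⁻¹ x (δ ε x u) = u
  domain_tech : ∀ K : Set X, IsCompact K → ∃ R > 0, ∃ ε₀ ∈ Ioo (0:ℝ) 1,
    ∀ x ∈ K, ∀ u ∈ closedBall x R, ∀ v ∈ closedBall x R, ∀ ε : Γ, ν ε < ε₀ →
      δ ε x v ∈ W ε⁻¹ (δ ε x u)
  -- A1
  δ_base : ∀ ε x, ν ε ≤ 1 → δ ε x x = x
  δ_one : ∀ x y, δ 1 x y = y
  δ_cont : ContinuousOn (fun p : Γ × X × X => δ p.1 p.2.1 p.2.2)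
    {p : Γ × X × X | ν p.1 ≤ 1 ∧ p.2.2 ∈ U p.2.1}
  δ_tendsto_zero : ∀ x : X, ∀ y ∈ U x, ∀ η > 0, ∃ θ > 0, ∀ ε : Γ, ν ε < θ →
    dist (δ ε x y) x < η
  -- A2
  δ_comp : ∀ ε μ x, ν ε ≤ 1 → ν μ ≤ 1 → ∀ u ∈ closedBall x rA,
    δ ε x (δ μ x u) = δ (ε * μ) x u
  -- A3 : the limit distances `d^x`
  dx : X → X → X → ℝ
  dx_lim : ∀ K : Set X, IsCompact K → ∀ η > 0, ∃ θ > 0, ∀ ε : Γ, ν ε < θ →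
    ∀ x ∈ K, ∀ u ∈ closedBall x rA, ∀ v ∈ closedBall x rA,
      |(1 / ν ε) * dist (δ ε x u) (δ ε x v) - dx x u v| < η
  dx_nondegenerate : ∀ x : X, ∀ u ∈ closedBall x rA, ∀ v ∈ closedBall x rA,
    dx x u v = 0 → u = v

namespace DilatationStructure

variable {Γ : Type*} [CommGroup Γ] [TopologicalSpace Γ] {X : Type*} [MetricSpace X]

/-- the difference operation `Δ_ε^x(u,v) = δ_{ε⁻¹}^{δ_ε^x u} δ_ε^x v` -/
def difOp (D : DilatationStructure Γ X) (ε : Γ) (x u v : X) : X :=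
  D.δ ε⁻¹ (D.δ ε x u) (D.δ ε x v)

/-- the sum operation `Σ_ε^x(u,v) = δ_{ε⁻¹}^x δ_ε^{δ_ε^x u} v` -/
def sumOp (D : DilatationStructure Γ X) (ε : Γ) (x u v : X) : X :=
  D.δ ε⁻¹ x (D.δ ε (D.δ ε x u) v)

/-- the inverse operation `inv_ε^x(u) = δ_{ε⁻¹}^{δ_ε^x u} x` -/
def invOp (D : DilatationStructure Γ X) (ε : Γ) (x u : X) : X :=
  D.δ ε⁻¹ (D.δ ε x u) x

/-- A dilatation structure is linear if `δ_ε^x δ_μ^y z = δ_μ^{δ_ε^x y} δ_ε^x z`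
for sufficiently closed `x, y, z`. -/
def IsLinear (D : DilatationStructure Γ X) : Prop :=
  ∀ K : Set X, IsCompact K → ∃ C > 0, ∀ ε μ : Γ, D.ν ε ≤ 1 → D.ν μ ≤ 1 →
    ∀ x ∈ K, ∀ y ∈ K, ∀ z ∈ K,
      dist x y ≤ C → dist x z ≤ C → dist y z ≤ C →
        D.δ ε x (D.δ μ y z) = D.δ μ (D.δ ε x y) (D.δ ε x z)

/-- A transformation `A : X → X` is linear (w.r.t. a dilatation structure) if it is
Lipschitz and commutes with dilatations. -/
def IsLinearTransform (D : DilatationStructure Γ X) (A : X → X) : Prop :=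
  (∃ C : NNReal, LipschitzWith C A) ∧
  ∀ x : X, ∀ u ∈ D.U x, ∀ ε : Γ, D.ν ε < 1 → A u ∈ D.U (A x) →
    A (D.δ ε x u) = D.δ ε (A x) (A u)

end DilatationStructure

/-- A strong dilatation structure: a dilatation structure satisfying in addition
axiom A4, the uniform convergence of `Δ_ε^x(u,v)` (hence also of `Σ_ε^x(u,v)` and
`inv_ε^x(u)`) as `ε → 0`. -/
structure StrongDilatationStructure (Γ : Type*) [CommGroup Γ] [TopologicalSpace Γ]
    (X : Type*) [MetricSpace X] extends DilatationStructure Γ X where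
  /-- `Δ^x(u,v)` -/
  difLim : X → X → X → X
  /-- `Σ^x(u,v)` -/
  sumLim : X → X → X → X
  /-- `inv^x(u)` -/
  invLim : X → X → X
  dif_conv : ∀ K : Set X, IsCompact K → ∃ R > 0, ∀ η > 0, ∃ θ > 0, ∀ ε : Γ, ν ε < θ →
    ∀ x ∈ K, ∀ u ∈ closedBall x R, ∀ v ∈ closedBall x R,
      dist (δ ε⁻¹ (δ ε x u) (δ ε x v)) (difLim x u v) < η
  sum_conv : ∀ K : Set X, IsCompact K → ∃ R > 0, ∀ η > 0, ∃ θ > 0, ∀ ε : Γ, ν ε < θ →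
    ∀ x ∈ K, ∀ u ∈ closedBall x R, ∀ v ∈ closedBall x R,
      dist (δ ε⁻¹ x (δ ε (δ ε x u) v)) (sumLim x u v) < η
  inv_conv : ∀ K : Set X, IsCompact K → ∃ R > 0, ∀ η > 0, ∃ θ > 0, ∀ ε : Γ, ν ε < θ →
    ∀ x ∈ K, ∀ u ∈ closedBall x R,
      dist (δ ε⁻¹ (δ ε x u) x) (invLim x u) < η

variable {Γ : Type*} [CommGroup Γ] [TopologicalSpace Γ] {X : Type*} [MetricSpace X]

lemma DilatationStructure.ν_one (D : DilatationStructure Γ X) : D.ν 1 = 1 := by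
  have h := D.ν_mul 1 1
  have h1 := D.ν_pos 1
  rw [one_mul] at h
  nlinarith

lemma DilatationStructure.ν_inv (D : DilatationStructure Γ X) (ε : Γ) :
    D.ν ε⁻¹ = 1 / D.ν ε := by
  have h := D.ν_mul ε ε⁻¹
  rw [mul_inv_cancel, D.ν_one] at h
  rw [eq_div_iff (ne_of_gt (D.ν_pos ε))]
  linarith [mul_comm (D.ν ε) (D.ν ε⁻¹)]

/-- A dilatation with `ν μ ≤ 1` maps `U x` into `ball x rB`. -/
lemma DilatationStructure.δ_mem_ball_rB (D : DilatationStructure Γ X)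
    {x u : X} (hu : u ∈ D.U x) {μ : Γ} (hμ : D.ν μ ≤ 1) :
    D.δ μ x u ∈ ball x D.rB := by
  obtain ⟨ε, hε⟩ := D.ν_inf 1 one_pos
  set y := D.δ μ x u with hy
  have hyV : y ∈ D.V μ x := (D.δ_homeo μ x hμ).2.1.mapsTo hu
  have hyU : y ∈ D.U x := D.V_subset_U μ x hμ hyV
  have hzV : D.δ ε x y ∈ D.V ε x := (D.δ_homeo ε x hε.le).2.1.mapsTo hyU
  have hzW : D.δ ε x y ∈ D.W ε⁻¹ x := D.V_subset_W ε x hε hzV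
  have hεinv : 1 < D.ν ε⁻¹ := by
    rw [D.ν_inv]
    have hεp := D.ν_pos ε
    rw [lt_div_iff₀ hεp, one_mul]
    exact hε
  have himg := D.δ_image_W ε⁻¹ x hεinv ⟨D.δ ε x y, hzW, rfl⟩
  rwa [D.δ_inv ε x hε.le y hyU] at himg

/-- **Theorem (tangent bundle), part (a): the cone property.**  For a dilatation structure
`(X,d,δ)`, all `x ∈ X`, all `u, v` with `d(x,u) ≤ 1`, `d(x,v) ≤ 1` and all `μ ∈ Γ` with
`ν μ ≤ 1`: `d^x(u,v) = (1/ν μ) d^x(δ_μ^x u, δ_μ^x v)`. -/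
theorem dx_cone_property (D : DilatationStructure Γ X) :
    ∀ x u v : X, dist x u ≤ 1 → dist x v ≤ 1 → ∀ μ : Γ, D.ν μ ≤ 1 →
      D.dx x u v = (1 / D.ν μ) * D.dx x (D.δ μ x u) (D.δ μ x v) := by
  intro x u v hu hv μ hμ
  have hμp := D.ν_pos μ
  have hrA : (1:ℝ) < D.rA := lt_of_lt_of_le D.one_lt_rB D.rB_le_rA
  have huA : u ∈ closedBall x D.rA := by
    rw [mem_closedBall, dist_comm]; exact hu.trans hrA.le
  have hvA : v ∈ closedBall x D.rA := by
    rw [mem_closedBall, dist_comm]; exact hv.trans hrA.le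
  have huU : u ∈ D.U x := D.closedBall_subset_U x huA
  have hvU : v ∈ D.U x := D.closedBall_subset_U x hvA
  have hδuA : D.δ μ x u ∈ closedBall x D.rA := by
    have h := D.δ_mem_ball_rB huU hμ
    rw [mem_ball] at h
    rw [mem_closedBall]
    exact le_trans h.le D.rB_le_rA
  have hδvA : D.δ μ x v ∈ closedBall x D.rA := by
    have h := D.δ_mem_ball_rB hvU hμ
    rw [mem_ball] at h
    rw [mem_closedBall]
    exact le_trans h.le D.rB_le_rA
  have key : ∀ η > 0, |D.dx x u v - (1 / D.ν μ) * D.dx x (D.δ μ x u) (D.δ μ x v)| < η := by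
    intro η hη
    have hη' : 0 < min (η * D.ν μ / 2) (η / 2) := by positivity
    obtain ⟨θ, hθ, hlim⟩ := D.dx_lim {x} isCompact_singleton _ hη'
    obtain ⟨ε, hε⟩ := D.ν_inf (min θ 1) (by positivity)
    have hεθ : D.ν ε < θ := lt_of_lt_of_le hε (min_le_left _ _)
    have hε1 : D.ν ε < 1 := lt_of_lt_of_le hε (min_le_right _ _)
    have hεp := D.ν_pos ε
    have hεμθ : D.ν (ε * μ) < θ := by
      rw [D.ν_mul]
      calc D.ν ε * D.ν μ ≤ D.ν ε * 1 := by nlinarith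
        _ < θ := by rw [mul_one]; exact hεθ
    have hA := hlim (ε * μ) hεμθ x rfl u huA v hvA
    have hB := hlim ε hεθ x rfl (D.δ μ x u) hδuA (D.δ μ x v) hδvA
    rw [D.δ_comp ε μ x hε1.le hμ u huA, D.δ_comp ε μ x hε1.le hμ v hvA] at hB
    rw [D.ν_mul] at hA
    set a := dist (D.δ (ε * μ) x u) (D.δ (ε * μ) x v) with ha
    set p := D.ν ε
    set q := D.ν μ
    set s := D.dx x u v
    set t := D.dx x (D.δ μ x u) (D.δ μ x v)
    -- hA : |1/(p*q) * a - s| < min (η*q/2) (η/2)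
    -- hB : |1/p * a - t| < min (η*q/2) (η/2)
    have hA' : |1 / (p * q) * a - s| < η / 2 := lt_of_lt_of_le hA (min_le_right _ _)
    have hB' : |1 / p * a - t| < η * q / 2 := lt_of_lt_of_le hB (min_le_left _ _)
    have hrel : (1:ℝ) / q * (1 / p * a) = 1 / (p * q) * a := by
      rw [← mul_assoc, div_mul_div_comm, one_mul, mul_comm p q]
    calc |s - 1 / q * t|
        ≤ |s - 1 / (p * q) * a| + |1 / (p * q) * a - 1 / q * t| := abs_sub_le _ _ _
      _ = |1 / (p * q) * a - s| + 1 / q * |1 / p * a - t| := by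
          rw [abs_sub_comm, ← hrel, ← mul_sub, abs_mul, abs_of_pos (by positivity : (0:ℝ) < 1 / q)]
      _ < η / 2 + 1 / q * (η * q / 2) := by
          have : 1 / q * |1 / p * a - t| < 1 / q * (η * q / 2) := by
            apply mul_lt_mul_of_pos_left hB' (by positivity)
          linarith
      _ = η := by field_simp; norm_num
  by_contra h
  have h0 : 0 < |D.dx x u v - (1 / D.ν μ) * D.dx x (D.δ μ x u) (D.δ μ x v)| :=
    abs_pos.mpr (sub_ne_zero.mpr h)
  exact lt_irrefl _ (key _ h0)
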